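/- Suppose y = P v + P̄ ε̄ where P ∈ ℝ^{p×ℓ}, P̄ ∈ ℝ^{p×(p-ℓ)}, [P P̄] is invertible, P̄⊥ has full column rank with P̄ᵀ P̄⊥ = 0, and R = P̄⊥ (Pᵀ P̄⊥)⁻¹. Then Rᵀ y = v, i.e., the latent vector is exactly recovered by the oblique projection. -/

import Mathlib

open Matrix

theorem stmt_4 {p ℓ : ℕ} (hl : 0 < ℓ) (hlp : ℓ < p)
    (P : Matrix (Fin p) (Fin ℓ) ℝ) (Pbar : Matrix (Fin p) (Fin (p - ℓ)) ℝ)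
    (Pperp : Matrix (Fin p) (Fin ℓ) ℝ)
    (hrank : Pperp.rank = ℓ)
    (horth : Pbarᵀ * Pperp = 0)
    (hinv : ∃ B : Matrix (Fin ℓ ⊕ Fin (p - ℓ)) (Fin p) ℝ,
      fromCols P Pbar * B = 1 ∧ B * fromCols P Pbar = 1)
    (R : Matrix (Fin p) (Fin ℓ) ℝ) (hR : R = Pperp * (Pᵀ * Pperp)⁻¹)
    (v : Fin ℓ → ℝ) (ebar : Fin (p - ℓ) → ℝ) (y : Fin p → ℝ)
    (hy : y = P *ᵥ v + Pbar *ᵥ ebar) :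
    Rᵀ *ᵥ y = v := by
  obtain ⟨B, hB1, hB2⟩ := hinv
  -- Pperp has injective mulVec
  have hPperp_inj : Function.Injective (Pperp.mulVec) := by
    rw [← Matrix.coe_mulVecLin, ← LinearMap.ker_eq_bot]
    have h := LinearMap.finrank_range_add_finrank_ker (Pperp.mulVecLin)
    rw [show Module.finrank ℝ (LinearMap.range Pperp.mulVecLin) = ℓ from hrank,
      Module.finrank_fintype_fun_eq_card, Fintype.card_fin] at h
    exact Submodule.finrank_eq_zero.mp (by omega)
  -- Pᵀ * Pperp is a unit
  have hunit : IsUnit (Pᵀ * Pperp) := by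
    rw [← Matrix.mulVec_injective_iff_isUnit]
    intro x₁ x₂ hx
    apply hPperp_inj
    have hfull : ∀ w : Fin p → ℝ, Pᵀ *ᵥ w = 0 → Pbarᵀ *ᵥ w = 0 → w = 0 := by
      intro w h1 h2
      have hfw : (fromCols P Pbar)ᵀ *ᵥ w = 0 := by
        rw [transpose_fromCols, fromRows_mulVec, h1, h2]
        ext (i | i) <;> simp
      have := congrArg (fun z => Bᵀ *ᵥ z) hfw
      simpa [mulVec_mulVec, ← transpose_mul, hB1] using this
    have h1 : Pᵀ *ᵥ (Pperp *ᵥ x₁ - Pperp *ᵥ x₂) = 0 := by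
      rw [mulVec_sub, mulVec_mulVec, mulVec_mulVec, hx, sub_self]
    have h2 : Pbarᵀ *ᵥ (Pperp *ᵥ x₁ - Pperp *ᵥ x₂) = 0 := by
      simp [mulVec_sub, mulVec_mulVec, horth]
    have := hfull _ h1 h2
    exact sub_eq_zero.mp this
  have hdet : IsUnit (Pᵀ * Pperp).det := (Matrix.isUnit_iff_isUnit_det _).mp hunit
  have hRT : Rᵀ = (Pperpᵀ * P)⁻¹ * Pperpᵀ := by
    rw [hR, transpose_mul, transpose_nonsing_inv, transpose_mul, transpose_transpose]
  have hRP : Rᵀ * P = 1 := by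
    rw [hRT, Matrix.mul_assoc, Matrix.nonsing_inv_mul _ (by
      rwa [← Matrix.det_transpose, transpose_mul, transpose_transpose])]
  have hRPbar : Rᵀ * Pbar = 0 := by
    rw [hRT, Matrix.mul_assoc]
    have : Pperpᵀ * Pbar = 0 := by
      have := congrArg transpose horth
      simpa [transpose_mul] using this
    rw [this, Matrix.mul_zero]
  rw [hy, mulVec_add, mulVec_mulVec, mulVec_mulVec, hRP, hRPbar, one_mulVec,
    zero_mulVec, add_zero]
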